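/- arXiv:2106.02573 — 5 statements merged into one kernel-verified Lean document; each statement's English description precedes it below -/
import Mathlib

section
/- Let f : A → B and g : B → D be injective homomorphisms of finite undirected multigraphs. Define the multigraph C by V_C = (V_D ∖ g_V(V_B)) ∪ g_V(f_V(V_A)) and E_C = { x ∈ E_D | (x ∉ g_E(E_B) or x ∈ g_E(f_E(E_A))) and both endpoints of x (the entries of i_D(x)) lie in V_C }, with incidence map the restriction of i_D; let φ_D : C → D be the inclusion homomorphism and φ_C : A → C the corestriction of g ∘ f. Then φ_C and φ_D are injective homomorphisms, the square commutes (g ∘ f = φ_D ∘ φ_C), and the square is a pullback: for every finite undirected multigraph W and homomorphisms p : W → B, q : W → C with g ∘ p = φ_D ∘ q, there exists a unique homomorphism w : W → A with f ∘ w = p and φ_C ∘ w = q. -/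
/-- A finite undirected multigraph: a finite vertex set, a finite edge set, and an
incidence map assigning to each edge its unordered pair of endpoints (loops allowed). -/
structure MG where
  V : Type
  E : Type
  finV : Finite V
  finE : Finite E
  inc : E → Sym2 V

/-- A homomorphism of finite undirected multigraphs: a pair of maps on vertices and edges
compatible with the incidence maps. -/
structure MG.Hom (G H : MG) where
  vmap : G.V → H.V
  emap : G.E → H.E
  comm : ∀ e, H.inc (emap e) = Sym2.map vmap (G.inc e)

/-- A homomorphism is injective if both its components are injective. -/
def MG.Hom.Injective {G H : MG} (φ : G.Hom H) : Prop :=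
  Function.Injective φ.vmap ∧ Function.Injective φ.emap

/-- A homomorphism is surjective if both its components are surjective. -/
def MG.Hom.Surjective {G H : MG} (φ : G.Hom H) : Prop :=
  Function.Surjective φ.vmap ∧ Function.Surjective φ.emap

/-- A homomorphism is an isomorphism if both its components are bijective. -/
def MG.Hom.IsIso {G H : MG} (φ : G.Hom H) : Prop :=
  Function.Bijective φ.vmap ∧ Function.Bijective φ.emap

/-- Composition of homomorphisms of multigraphs. -/
def MG.Hom.comp {G H K : MG} (ψ : H.Hom K) (φ : G.Hom H) : G.Hom K where
  vmap := ψ.vmap ∘ φ.vmap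
  emap := ψ.emap ∘ φ.emap
  comm := by
    intro e
    simp only [Function.comp_apply, ψ.comm, φ.comm, Sym2.map_map]

/-- Any unordered pair all of whose entries satisfy a predicate `p` lifts to an
unordered pair of elements of the subtype of `p`. -/
lemma sym2_restrict_exists {α : Type} {p : α → Prop} (s : Sym2 α) (h : ∀ a ∈ s, p a) :
    ∃ t : Sym2 {a // p a}, Sym2.map Subtype.val t = s := by
  revert h
  induction s using Sym2.ind with
  | _ x y =>
    intro h
    exact ⟨s(⟨x, h x (by simp)⟩, ⟨y, h y (by simp)⟩), by simp⟩

namespace MG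

variable {A B D : MG}

/-- The vertex set `(V_D ∖ g_V(V_B)) ∪ g_V(f_V(V_A))` of the final pullback
complement of `g ∘ f`. -/
def fpcV (f : A.Hom B) (g : B.Hom D) : Set D.V :=
  (Set.range g.vmap)ᶜ ∪ Set.range (g.vmap ∘ f.vmap)

/-- The edge set of the final pullback complement of `g ∘ f`: the edges of `D` that
are not in `g_E(E_B)` unless they are in `g_E(f_E(E_A))`, and both of whose endpoints
lie in the vertex set `fpcV f g`. -/
def fpcE (f : A.Hom B) (g : B.Hom D) : Set D.E :=
  {x | (x ∉ Set.range g.emap ∨ x ∈ Set.range (g.emap ∘ f.emap)) ∧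
    ∀ w ∈ D.inc x, w ∈ fpcV f g}

/-- The final-pullback-complement object `C`: the multigraph with vertex set `fpcV f g`,
edge set `fpcE f g`, and incidence map the restriction of that of `D`. -/
noncomputable def fpc (f : A.Hom B) (g : B.Hom D) : MG where
  V := {v : D.V // v ∈ fpcV f g}
  E := {x : D.E // x ∈ fpcE f g}
  finV := by have := D.finV; exact inferInstance
  finE := by have := D.finE; exact inferInstance
  inc := fun x => (sym2_restrict_exists (D.inc x.val) x.prop.2).choose

lemma fpc_inc_spec (f : A.Hom B) (g : B.Hom D) (x : (fpc f g).E) :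
    Sym2.map Subtype.val ((fpc f g).inc x) = D.inc x.val :=
  (sym2_restrict_exists (D.inc x.val) x.prop.2).choose_spec

/-- The inclusion homomorphism `φ_D : C → D`. -/
noncomputable def fpcToD (f : A.Hom B) (g : B.Hom D) : (fpc f g).Hom D where
  vmap := Subtype.val
  emap := Subtype.val
  comm := fun x => (fpc_inc_spec f g x).symm

lemma fpc_vmem (f : A.Hom B) (g : B.Hom D) (a : A.V) :
    g.vmap (f.vmap a) ∈ fpcV f g :=
  Or.inr ⟨a, rfl⟩

lemma fpc_emem (f : A.Hom B) (g : B.Hom D) (e : A.E) :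
    g.emap (f.emap e) ∈ fpcE f g := by
  constructor
  · exact Or.inr ⟨e, rfl⟩
  · intro w hw
    rw [g.comm, f.comm, Sym2.map_map] at hw
    rcases Sym2.mem_map.mp hw with ⟨a, _, ha⟩
    exact Or.inr ⟨a, ha⟩

/-- The corestriction `φ_C : A → C` of `g ∘ f`. -/
noncomputable def fpcFromA (f : A.Hom B) (g : B.Hom D) : A.Hom (fpc f g) where
  vmap := fun a => ⟨g.vmap (f.vmap a), fpc_vmem f g a⟩
  emap := fun e => ⟨g.emap (f.emap e), fpc_emem f g e⟩
  comm := by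
    intro e
    apply Sym2.map.injective (Subtype.val_injective)
    refine (fpc_inc_spec f g _).trans ?_
    show D.inc (g.emap (f.emap e)) = _
    rw [g.comm, f.comm, Sym2.map_map]
    exact Eq.symm (Sym2.map_map ..)

end MG


lemma MG.Hom.ext' {G H : MG} {φ ψ : G.Hom H} (h1 : φ.vmap = ψ.vmap)
    (h2 : φ.emap = ψ.emap) : φ = ψ := by
  cases φ; cases ψ; simp_all

/-- **The constructed square is a pullback, and its morphisms are injective.** For
composable injective homomorphisms `f : A → B`, `g : B → D` of finite undirected
multigraphs, the corestriction `φ_C : A → C` and inclusion `φ_D : C → D` of the explicit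
final-pullback-complement construction are injective, the square commutes
(`g ∘ f = φ_D ∘ φ_C`), and the square is a pullback. -/
theorem mg_fpc_is_pullback (A B D : MG) (f : A.Hom B) (g : B.Hom D)
    (hf : f.Injective) (hg : g.Injective) :
    (MG.fpcFromA f g).Injective ∧ (MG.fpcToD f g).Injective ∧
    g.comp f = (MG.fpcToD f g).comp (MG.fpcFromA f g) ∧
    ∀ (W : MG) (p : W.Hom B) (q : W.Hom (MG.fpc f g)),
      g.comp p = (MG.fpcToD f g).comp q →
      ∃! w : W.Hom A, f.comp w = p ∧ (MG.fpcFromA f g).comp w = q := by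
  obtain ⟨hfv, hfe⟩ := hf
  obtain ⟨hgv, hge⟩ := hg
  refine ⟨⟨fun a a' h => hfv (hgv (congrArg Subtype.val h)),
          fun e e' h => hfe (hge (congrArg Subtype.val h))⟩,
         ⟨Subtype.val_injective, Subtype.val_injective⟩,
         MG.Hom.ext' rfl rfl, ?_⟩
  intro W p q hpq
  have hv : ∀ v : W.V, g.vmap (p.vmap v) = (q.vmap v).val := by
    intro v; exact congrFun (congrArg MG.Hom.vmap hpq) v
  have he : ∀ e : W.E, g.emap (p.emap e) = (q.emap e).val := by
    intro e; exact congrFun (congrArg MG.Hom.emap hpq) e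
  -- construct vertex map
  have hva : ∀ v : W.V, ∃ a : A.V, f.vmap a = p.vmap v := by
    intro v
    have hmem : (q.vmap v).val ∈ MG.fpcV f g := (q.vmap v).prop
    rcases hmem with h | h
    · exact absurd ⟨p.vmap v, hv v⟩ h
    · rcases h with ⟨a, ha⟩
      exact ⟨a, hgv (by rw [← hv v] at ha; exact ha)⟩
  have hea : ∀ e : W.E, ∃ a : A.E, f.emap a = p.emap e := by
    intro e
    have hmem : (q.emap e).val ∈ MG.fpcE f g := (q.emap e).prop
    rcases hmem.1 with h | h
    · exact absurd ⟨p.emap e, he e⟩ h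
    · rcases h with ⟨a, ha⟩
      exact ⟨a, hge (by rw [← he e] at ha; exact ha)⟩
  choose wv hwv using hva
  choose we hwe using hea
  have wcomm : ∀ e, A.inc (we e) = Sym2.map wv (W.inc e) := by
    intro e
    apply Sym2.map.injective hfv
    rw [← f.comm, hwe, p.comm, Sym2.map_map]
    congr 1
    funext v
    exact (hwv v).symm
  refine ⟨⟨wv, we, wcomm⟩, ⟨MG.Hom.ext' (funext fun v => hwv v) (funext fun e => hwe e),
    MG.Hom.ext' ?_ ?_⟩, ?_⟩
  · funext v
    apply Subtype.val_injective
    show g.vmap (f.vmap (wv v)) = (q.vmap v).val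
    rw [hwv, hv]
  · funext e
    apply Subtype.val_injective
    show g.emap (f.emap (we e)) = (q.emap e).val
    rw [hwe, he]
  · rintro w ⟨hw1, -⟩
    refine MG.Hom.ext' (funext fun v => ?_) (funext fun e => ?_)
    · exact hfv (by rw [hwv]; exact congrFun (congrArg MG.Hom.vmap hw1) v)
    · exact hfe (by rw [hwe]; exact congrFun (congrArg MG.Hom.emap hw1) e)
end

section
/- Let A, B, C be finite undirected multigraphs that are simple (their incidence maps are injective), and let m : A → B and n : A → C be injective, edge-reflecting homomorphisms. Define the pushout multigraph D by V_D = V_B ⊕ (V_C ∖ n_V(V_A)) and E_D = E_B ⊕ (E_C ∖ n_E(E_A)), where the incidence map i_D acts as i_B on edges from E_B and on an edge x ∈ E_C ∖ n_E(E_A) is given by applying Sym2.map ψ to i_C(x), with ψ : V_C → V_D sending n_V(a) to the left copy of m_V(a) for each a ∈ V_A and every other vertex to its right copy. Then D is simple, i.e., its incidence map i_D is injective. -/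
/-- A multigraph is simple if its incidence map is injective: no two distinct edges have
the same unordered pair of endpoints. -/
def MG.IsSimple (G : MG) : Prop := Function.Injective G.inc

/-- An injective homomorphism is edge-reflecting if every edge of the codomain all of
whose endpoints lie in the image of the vertex map lies in the image of the edge map. -/
def MG.Hom.EdgeReflecting {G H : MG} (φ : G.Hom H) : Prop :=
  ∀ e' : H.E, (∀ w ∈ H.inc e', w ∈ Set.range φ.vmap) → e' ∈ Set.range φ.emap

namespace MG

variable {A B C : MG}

open Classical in
/-- The vertex map `ψ : V_C → V_B ⊕ (V_C ∖ n_V(V_A))` of the pushout construction: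
it sends `n_V(a)` to the left copy of `m_V(a)` for each `a ∈ V_A`, and every other
vertex of `C` to its right copy. -/
noncomputable def pushoutVmap (m : A.Hom B) (n : A.Hom C) (v : C.V) :
    B.V ⊕ {v : C.V // v ∉ Set.range n.vmap} :=
  if h : v ∈ Set.range n.vmap then Sum.inl (m.vmap h.choose) else Sum.inr ⟨v, h⟩

/-- The pushout multigraph `D` of the span `B ← A → C` (along `m` and `n`):
`V_D = V_B ⊕ (V_C ∖ n_V(V_A))`, `E_D = E_B ⊕ (E_C ∖ n_E(E_A))`, with incidence acting
as in `B` on edges from `E_B`, and on an edge `x ∈ E_C ∖ n_E(E_A)` by applying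
`Sym2.map (pushoutVmap m n)` to `i_C(x)`. -/
noncomputable def pushout (m : A.Hom B) (n : A.Hom C) : MG where
  V := B.V ⊕ {v : C.V // v ∉ Set.range n.vmap}
  E := B.E ⊕ {x : C.E // x ∉ Set.range n.emap}
  finV := by have := B.finV; have := C.finV; exact inferInstance
  finE := by have := B.finE; have := C.finE; exact inferInstance
  inc := Sum.elim (fun e => Sym2.map Sum.inl (B.inc e))
    (fun x => Sym2.map (pushoutVmap m n) (C.inc x.val))

end MG

/-- **Pushouts of spans of edge-reflecting monos preserve simplicity.** If `A`, `B`, `C`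
are simple finite undirected multigraphs and `m : A → B`, `n : A → C` are injective,
edge-reflecting homomorphisms, then the pushout multigraph `D` is simple, i.e., its
incidence map is injective. -/
theorem mg_pushout_of_edgeReflecting_isSimple (A B C : MG)
    (hA : A.IsSimple) (hB : B.IsSimple) (hC : C.IsSimple)
    (m : A.Hom B) (n : A.Hom C)
    (hm : m.Injective) (hn : n.Injective)
    (hmer : m.EdgeReflecting) (hner : n.EdgeReflecting) :
    (MG.pushout m n).IsSimple := by

  intro x y h
  have hpsiinj : Function.Injective (MG.pushoutVmap m n) := by
    intro v1 v2 hv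
    unfold MG.pushoutVmap at hv
    by_cases h1 : v1 ∈ Set.range n.vmap <;> by_cases h2 : v2 ∈ Set.range n.vmap <;>
      simp [h1, h2] at hv
    · have := hm.1 hv
      rw [← h1.choose_spec, ← h2.choose_spec, this]
    · exact hv
  have hrange : ∀ (x : {x : C.E // x ∉ Set.range n.emap}) (e : B.E),
      Sym2.map Sum.inl (B.inc e) =
        Sym2.map (MG.pushoutVmap m n) (C.inc x.val) → False := by
    intro x e heq
    have hmem : ∀ w ∈ C.inc x.val, w ∈ Set.range n.vmap := by
      intro w hw
      by_contra hwr
      have : MG.pushoutVmap m n w ∈ Sym2.map (MG.pushoutVmap m n) (C.inc x.val) :=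
        Sym2.mem_map.2 ⟨w, hw, rfl⟩
      rw [← heq] at this
      obtain ⟨b, _, hb⟩ := Sym2.mem_map.1 this
      rw [MG.pushoutVmap, dif_neg hwr] at hb
      exact absurd hb (by simp)
    exact x.2 (hner x.val hmem)
  match x, y with
  | Sum.inl e1, Sum.inl e2 =>
    have : B.inc e1 = B.inc e2 :=
      Sym2.map.injective Sum.inl_injective (by simpa [MG.pushout] using h)
    exact congrArg Sum.inl (hB this)
  | Sum.inl e, Sum.inr x =>
    exact absurd (hrange x e (by simpa [MG.pushout] using h)) id
  | Sum.inr x, Sum.inl e =>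
    exact absurd (hrange x e (by simpa [MG.pushout] using h.symm)) id
  | Sum.inr x1, Sum.inr x2 =>
    have : C.inc x1.val = C.inc x2.val :=
      Sym2.map.injective hpsiinj (by simpa [MG.pushout] using h)
    exact congrArg Sum.inr (Subtype.ext (hC this))
end

section
/- Let A be a finite undirected multigraph with an edge e ∈ E_A whose endpoints u ≠ v are such that V_A = V₁ ⊔ V₂ with u ∈ V₁, v ∈ V₂ and every edge of A other than e has both endpoints in V₁ or both in V₂ (e is a bridge); write A₁, A₂ for the induced subgraphs on V₁, V₂, and A∖e for the multigraph with vertex set V_A and edge set E_A ∖ {e}, so A∖e = A₁ + A₂. Let β₁ : A₁ → B₁ and β₂ : A₂ → B₂ be injective homomorphisms, β : A∖e → B₁ + B₂ their disjoint union, and α : A∖e → A the evident inclusion homomorphism. Then for every finite undirected multigraph X' and all injective homomorphisms x' : A∖e → X', a' : X' → A, b' : X' → B₁ + B₂ satisfying a' ∘ x' = α and b' ∘ x' = β, the homomorphism x' is an isomorphism (both its vertex component and its edge component are bijective). -/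
namespace MG

/-- The disjoint union (sum) of two finite undirected multigraphs. -/
def sum (G H : MG) : MG where
  V := G.V ⊕ H.V
  E := G.E ⊕ H.E
  finV := by have := G.finV; have := H.finV; exact inferInstance
  finE := by have := G.finE; have := H.finE; exact inferInstance
  inc := Sum.elim (fun e => Sym2.map Sum.inl (G.inc e)) (fun e => Sym2.map Sum.inr (H.inc e))

/-- The multigraph `G ∖ e` obtained from `G` by deleting the edge `e` (keeping all
vertices). -/
def deleteEdge (G : MG) (e : G.E) : MG where
  V := G.V
  E := {x : G.E // x ≠ e}
  finV := G.finV
  finE := by have := G.finE; exact inferInstance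
  inc := fun x => G.inc x.val

/-- The evident inclusion homomorphism `G ∖ e → G`. -/
def deleteEdgeHom (G : MG) (e : G.E) : (G.deleteEdge e).Hom G where
  vmap := id
  emap := Subtype.val
  comm := by intro x; simp [deleteEdge, Sym2.map_id]

/-- The multigraph obtained from `G` by adding one new edge with endpoints `a` and `b`. -/
def addEdge (G : MG) (a b : G.V) : MG where
  V := G.V
  E := Option G.E
  finV := G.finV
  finE := by have := G.finE; have : Fintype G.E := Fintype.ofFinite _; exact inferInstance
  inc := fun x => x.elim s(a, b) G.inc

/-- The evident inclusion homomorphism from `G` into `G` with one extra edge added. -/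
def addEdgeHom (G : MG) (a b : G.V) : G.Hom (G.addEdge a b) where
  vmap := id
  emap := some
  comm := by intro x; simp [addEdge, Sym2.map_id]

end MG

/-- **Uniqueness of the span factorization for a bridge.** Let `e` be a bridge of `A`
with endpoints `u ≠ v` separated by the partition `P` of the vertices (so that
`A ∖ e = A₁ + A₂`), let `β : A ∖ e → B₁ + B₂` be the disjoint union of injective
homomorphisms `β₁ : A₁ → B₁` and `β₂ : A₂ → B₂` (encoded by the hypotheses that `β` is
injective and maps the two parts of the partition into the two summands), and let
`α : A ∖ e → A` be the inclusion. Then for every `X'` and all injective homomorphisms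
`x' : A ∖ e → X'`, `a' : X' → A`, `b' : X' → B₁ + B₂` with `a' ∘ x' = α` and
`b' ∘ x' = β`, the homomorphism `x'` is an isomorphism. -/
theorem mg_bridge_span_factor_iso (A B₁ B₂ : MG) (e : A.E) (P : A.V → Prop) (u v : A.V)
    (hinc : A.inc e = s(u, v)) (huv : u ≠ v) (hu : P u) (hv : ¬ P v)
    (hbridge : ∀ x : A.E, x ≠ e → (∀ w ∈ A.inc x, P w) ∨ (∀ w ∈ A.inc x, ¬ P w))
    (β : (A.deleteEdge e).Hom (B₁.sum B₂)) (hβ : β.Injective)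
    (hβ₁ : ∀ w : A.V, P w → ∃ b : B₁.V, β.vmap w = Sum.inl b)
    (hβ₂ : ∀ w : A.V, ¬ P w → ∃ b : B₂.V, β.vmap w = Sum.inr b)
    (X' : MG) (x' : (A.deleteEdge e).Hom X') (a' : X'.Hom A) (b' : X'.Hom (B₁.sum B₂))
    (hx' : x'.Injective) (ha' : a'.Injective) (hb' : b'.Injective)
    (hax : a'.comp x' = A.deleteEdgeHom e) (hbx : b'.comp x' = β) :
    x'.IsIso := by

  have hv' : ∀ w, a'.vmap (x'.vmap w) = w := fun w =>
    congrFun (congrArg MG.Hom.vmap hax) w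
  have he' : ∀ x : (A.deleteEdge e).E, a'.emap (x'.emap x) = x.val :=
    fun x => congrFun (congrArg MG.Hom.emap hax) x
  have hbv : ∀ w, b'.vmap (x'.vmap w) = β.vmap w := fun w =>
    congrFun (congrArg MG.Hom.vmap hbx) w
  have hxvs : Function.Surjective x'.vmap := by
    intro y
    exact ⟨a'.vmap y, ha'.1 (hv' _)⟩
  refine ⟨⟨hx'.1, hxvs⟩, hx'.2, ?_⟩
  intro f
  by_cases hcase : a'.emap f = e
  · exfalso
    have h1 : Sym2.map a'.vmap (X'.inc f) = s(u, v) := by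
      rw [← a'.comm f, hcase, hinc]
    have h2 : Sym2.map a'.vmap (X'.inc f) = Sym2.map a'.vmap s(x'.vmap u, x'.vmap v) := by
      simp [h1, hv']
      exact Or.inl ⟨(hv' u).symm, (hv' v).symm⟩
    have h3 : X'.inc f = s(x'.vmap u, x'.vmap v) := Sym2.map.injective ha'.1 h2
    obtain ⟨b₁, hb₁⟩ := hβ₁ u hu
    obtain ⟨b₂, hb₂⟩ := hβ₂ v hv
    have h4 : (B₁.sum B₂).inc (b'.emap f) = s(Sum.inl b₁, Sum.inr b₂) := by
      rw [b'.comm f, h3]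
      simp [hbv, hb₁, hb₂]
      exact congrArg₂ (fun p q => s(p, q)) ((hbv u).trans hb₁) ((hbv v).trans hb₂)
    cases hg : b'.emap f with
    | inl g =>
      rw [hg] at h4
      have : (Sum.inr b₂ : B₁.V ⊕ B₂.V) ∈ Sym2.map Sum.inl (B₁.inc g) := by
        rw [show Sym2.map Sum.inl (B₁.inc g) = (B₁.sum B₂).inc (Sum.inl g) from rfl, h4]
        simp
      obtain ⟨a, _, ha⟩ := Sym2.mem_map.mp this
      exact Sum.inl_ne_inr ha
    | inr g =>
      rw [hg] at h4
      have : (Sum.inl b₁ : B₁.V ⊕ B₂.V) ∈ Sym2.map Sum.inr (B₂.inc g) := by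
        rw [show Sym2.map Sum.inr (B₂.inc g) = (B₁.sum B₂).inc (Sum.inr g) from rfl, h4]
        simp
      obtain ⟨a, _, ha⟩ := Sym2.mem_map.mp this
      exact Sum.inr_ne_inl ha
  · exact ⟨⟨a'.emap f, hcase⟩, ha'.2 (he' _)⟩
end

section
/- For finite undirected multigraphs (say, with vertex and edge sets given by finite subsets of ℕ), define nested conditions over a multigraph X inductively: true_X is a condition over X; if f : X → A is an injective homomorphism and c_A a condition over A, then ∃(f, c_A) is a condition over X; if c_X is a condition over X so is ¬c_X; if c_X and c_X' are conditions over X so is c_X ∧ c_X'. Satisfaction by an injective homomorphism h : X → Z is defined recursively: h ⊨ true_X always; h ⊨ ∃(f, c_A) iff there is an injective homomorphism g : A → Z with g ∘ f = h and g ⊨ c_A; h ⊨ ¬c_X iff not h ⊨ c_X; h ⊨ c_X ∧ c_X' iff h ⊨ c_X and h ⊨ c_X'. Then the Shift operation exists: for every condition c_X over X and every injective homomorphism y : X → Y, there exists a condition c' over Y such that for every finite undirected multigraph Z and every injective homomorphism g : Y → Z, one has g ⊨ c' if and only if g ∘ y ⊨ c_X. -/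
/-- Nested conditions over a finite undirected multigraph `X`: `true`, existential
conditions `∃(f, c_A)` along injective homomorphisms `f : X → A`, negation, and
conjunction. -/
inductive MG.Cond : MG → Type 2 where
  | tru (X : MG) : MG.Cond X
  | ex {X A : MG} (f : X.Hom A) (hf : f.Injective) (c : MG.Cond A) : MG.Cond X
  | not {X : MG} (c : MG.Cond X) : MG.Cond X
  | and {X : MG} (c c' : MG.Cond X) : MG.Cond X

/-- Satisfaction of a condition over `X` by a homomorphism `h : X → Z`:
`h ⊨ true` always; `h ⊨ ∃(f, c_A)` iff there is an injective `g : A → Z` with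
`g ∘ f = h` and `g ⊨ c_A`; negation and conjunction are interpreted classically. -/
def MG.Sat : {X : MG} → MG.Cond X → {Z : MG} → (h : X.Hom Z) → Prop
  | _, .tru _, _, _ => True
  | _, .ex f _ c, _, h => ∃ g, g.Injective ∧ g.comp f = h ∧ MG.Sat c g
  | _, .not c, _, h => ¬ MG.Sat c h
  | _, .and c c', _, h => MG.Sat c h ∧ MG.Sat c' h

namespace MGShift

open Classical

theorem hom_ext {G H : MG} {φ ψ : G.Hom H} (hv : φ.vmap = ψ.vmap)
    (he : φ.emap = ψ.emap) : φ = ψ := by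
  cases φ; cases ψ; simp_all

theorem comp_assoc {G H K L : MG} (χ : K.Hom L) (ψ : H.Hom K) (φ : G.Hom H) :
    (χ.comp ψ).comp φ = χ.comp (ψ.comp φ) := hom_ext rfl rfl

theorem comp_inj {G H K : MG} {ψ : H.Hom K} {φ : G.Hom H} (hψ : ψ.Injective)
    (hφ : φ.Injective) : (ψ.comp φ).Injective :=
  ⟨hψ.1.comp hφ.1, hψ.2.comp hφ.2⟩

def orC {X : MG} (c c' : MG.Cond X) : MG.Cond X := .not (.and (.not c) (.not c'))

def disj {X : MG} : List (MG.Cond X) → MG.Cond X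
  | [] => .not (.tru X)
  | d :: l => orC d (disj l)

theorem sat_disj {X Z : MG} (l : List (MG.Cond X)) (h : X.Hom Z) :
    MG.Sat (disj l) h ↔ ∃ d ∈ l, MG.Sat d h := by
  induction l with
  | nil => simp [disj, MG.Sat]
  | cons d l ih =>
    simp only [disj, orC, MG.Sat, List.mem_cons]
    constructor
    · intro hh
      by_cases h1 : MG.Sat d h
      · exact ⟨d, Or.inl rfl, h1⟩
      · have h2 : MG.Sat (disj l) h := by tauto
        obtain ⟨e, he, hs⟩ := ih.mp h2
        exact ⟨e, Or.inr he, hs⟩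
    · rintro ⟨e, (rfl | he), hs⟩
      · exact fun hcon => hcon.1 hs
      · exact fun hcon => hcon.2 (ih.mpr ⟨e, he, hs⟩)

section Glue

variable {X A Y : MG} (f : X.Hom A) (y : X.Hom Y)

/-- Overlap patterns: partial matchings of `Y`'s vertices/edges with `A`'s. -/
abbrev SIdx (A Y : MG) : Type := (Y.V → Option A.V) × (Y.E → Option A.E)

variable (s : SIdx A Y)

abbrev EV : Type := Y.V ⊕ {w : A.V // ¬ ∃ u, s.1 u = some w}
abbrev EE : Type := Y.E ⊕ {e : A.E // ¬ ∃ u, s.2 u = some e}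

noncomputable def avm (w : A.V) : EV s :=
  if h : ∃ u, s.1 u = some w then Sum.inl h.choose else Sum.inr ⟨w, h⟩

noncomputable def aem (e : A.E) : EE s :=
  if h : ∃ u, s.2 u = some e then Sum.inl h.choose else Sum.inr ⟨e, h⟩

noncomputable def Einc : EE s → Sym2 (EV s)
  | Sum.inl u => Sym2.map Sum.inl (Y.inc u)
  | Sum.inr e => Sym2.map (avm s) (A.inc e.1)

noncomputable def EG : MG where
  V := EV s
  E := EE s
  finV := by have := Y.finV; have := A.finV; unfold EV; infer_instance
  finE := by have := Y.finE; have := A.finE; unfold EE; infer_instance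
  inc := Einc s

/-- A good pattern: partially injective, containing the matching induced by `f`,`y`,
and compatible with incidence. -/
def Good : Prop :=
  (∀ u u' w, s.1 u = some w → s.1 u' = some w → u = u') ∧
  (∀ u u' e, s.2 u = some e → s.2 u' = some e → u = u') ∧
  (∀ x, s.1 (y.vmap x) = some (f.vmap x)) ∧
  (∀ x, s.2 (y.emap x) = some (f.emap x)) ∧
  (∀ u e, s.2 u = some e → Sym2.map (avm s) (A.inc e) = Sym2.map Sum.inl (Y.inc u))

theorem avm_matched {u w} (hpi : ∀ u u' w, s.1 u = some w → s.1 u' = some w → u = u')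
    (h : s.1 u = some w) : avm s w = Sum.inl u := by
  unfold avm
  rw [dif_pos ⟨u, h⟩]
  exact congrArg _ (hpi _ _ _ (Exists.choose_spec (⟨u, h⟩ : ∃ u, s.1 u = some w)) h)

theorem aem_matched {u e} (hpi : ∀ u u' e, s.2 u = some e → s.2 u' = some e → u = u')
    (h : s.2 u = some e) : aem s e = Sum.inl u := by
  unfold aem
  rw [dif_pos ⟨u, h⟩]
  exact congrArg _ (hpi _ _ _ (Exists.choose_spec (⟨u, h⟩ : ∃ u, s.2 u = some e)) h)

theorem avm_inj : Function.Injective (avm s) := by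
  intro w w' h
  unfold avm at h
  split_ifs at h with h1 h2 h2
  · rw [Sum.inl.injEq] at h
    have h3 := h1.choose_spec
    rw [h, h2.choose_spec] at h3
    exact (Option.some_injective _ h3).symm
  · rw [Sum.inr.injEq, Subtype.mk.injEq] at h
    exact h

theorem aem_inj : Function.Injective (aem s) := by
  intro w w' h
  unfold aem at h
  split_ifs at h with h1 h2 h2
  · rw [Sum.inl.injEq] at h
    have h3 := h1.choose_spec
    rw [h, h2.choose_spec] at h3
    exact (Option.some_injective _ h3).symm
  · rw [Sum.inr.injEq, Subtype.mk.injEq] at h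
    exact h

def bHom : Y.Hom (EG s) where
  vmap := Sum.inl
  emap := Sum.inl
  comm e := rfl

theorem bHom_inj : (bHom s).Injective :=
  ⟨Sum.inl_injective, Sum.inl_injective⟩

variable {f y}

noncomputable def aHom (hs : Good f y s) : A.Hom (EG s) where
  vmap := avm s
  emap := aem s
  comm e := by
    unfold aem
    split_ifs with h
    · exact (hs.2.2.2.2 h.choose e h.choose_spec).symm
    · rfl

theorem aHom_inj (hs : Good f y s) : (aHom s hs).Injective :=
  ⟨avm_inj s, aem_inj s⟩

theorem square (hs : Good f y s) : (aHom s hs).comp f = (bHom s).comp y := by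
  refine hom_ext (funext fun x => ?_) (funext fun x => ?_)
  · exact avm_matched s hs.1 (hs.2.2.1 x)
  · exact aem_matched s hs.2.1 (hs.2.2.2.1 x)

variable (f y) {Z : MG} (g : Y.Hom Z) (k : A.Hom Z)

/-- The canonical overlap pattern induced by maps `g : Y → Z` and `k : A → Z`. -/
noncomputable def canS : SIdx A Y :=
  (fun v => if h : ∃ w, g.vmap v = k.vmap w then some h.choose else none,
   fun u => if h : ∃ e, g.emap u = k.emap e then some h.choose else none)

theorem canS_v_some {v w} (h : (canS g k).1 v = some w) : g.vmap v = k.vmap w := by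
  unfold canS at h
  dsimp only at h
  split_ifs at h with h1
  · rw [Option.some.injEq] at h
    rw [← h]
    exact h1.choose_spec

theorem canS_e_some {u e} (h : (canS g k).2 u = some e) : g.emap u = k.emap e := by
  unfold canS at h
  dsimp only at h
  split_ifs at h with h1
  · rw [Option.some.injEq] at h
    rw [← h]
    exact h1.choose_spec

theorem canS_v_total (hk : Function.Injective k.vmap) {v w} (h : g.vmap v = k.vmap w) :
    (canS g k).1 v = some w := by
  have h1 : ∃ w', g.vmap v = k.vmap w' := ⟨w, h⟩
  show (if h : ∃ w, g.vmap v = k.vmap w then some h.choose else none) = some w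
  rw [dif_pos h1]
  exact congrArg some (hk (h1.choose_spec.symm.trans h))

theorem canS_e_total (hk : Function.Injective k.emap) {u e} (h : g.emap u = k.emap e) :
    (canS g k).2 u = some e := by
  have h1 : ∃ e', g.emap u = k.emap e' := ⟨e, h⟩
  show (if h : ∃ e, g.emap u = k.emap e then some h.choose else none) = some e
  rw [dif_pos h1]
  exact congrArg some (hk (h1.choose_spec.symm.trans h))

noncomputable def qv : EV (canS g k) → Z.V := Sum.elim g.vmap fun w => k.vmap w.1
noncomputable def qe : EE (canS g k) → Z.E := Sum.elim g.emap fun e => k.emap e.1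

theorem qv_avm (hk : Function.Injective k.vmap) (w : A.V) :
    qv g k (avm (canS g k) w) = k.vmap w := by
  unfold avm
  split_ifs with h
  · exact canS_v_some g k h.choose_spec
  · rfl

theorem qe_aem (hk : Function.Injective k.emap) (e : A.E) :
    qe g k (aem (canS g k) e) = k.emap e := by
  unfold aem
  split_ifs with h
  · exact canS_e_some g k h.choose_spec
  · rfl

theorem qv_inj (hg : Function.Injective g.vmap) (hk : Function.Injective k.vmap) :
    Function.Injective (qv g k) := by
  rintro (v | w) (v' | w') h
  · exact congrArg Sum.inl (hg h)
  · exact absurd ⟨v, canS_v_total g k hk h⟩ w'.2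
  · exact absurd ⟨v', canS_v_total g k hk h.symm⟩ w.2
  · exact congrArg Sum.inr (Subtype.ext (hk h))

theorem qe_inj (hg : Function.Injective g.emap) (hk : Function.Injective k.emap) :
    Function.Injective (qe g k) := by
  rintro (v | w) (v' | w') h
  · exact congrArg Sum.inl (hg h)
  · exact absurd ⟨v, canS_e_total g k hk h⟩ w'.2
  · exact absurd ⟨v', canS_e_total g k hk h.symm⟩ w.2
  · exact congrArg Sum.inr (Subtype.ext (hk h))

theorem canS_good (hg : g.Injective) (hk : k.Injective) (hkf : k.comp f = g.comp y) :
    Good f y (canS g k) := by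
  have hv : ∀ x, g.vmap (y.vmap x) = k.vmap (f.vmap x) := fun x =>
    (congrFun (congrArg MG.Hom.vmap hkf) x).symm
  have he : ∀ x, g.emap (y.emap x) = k.emap (f.emap x) := fun x =>
    (congrFun (congrArg MG.Hom.emap hkf) x).symm
  refine ⟨?_, ?_, fun x => canS_v_total g k hk.1 (hv x),
      fun x => canS_e_total g k hk.2 (he x), ?_⟩
  · intro u u' w h h'
    exact hg.1 ((canS_v_some g k h).trans (canS_v_some g k h').symm)
  · intro u u' e h h'
    exact hg.2 ((canS_e_some g k h).trans (canS_e_some g k h').symm)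
  · intro u e h
    have hge : g.emap u = k.emap e := canS_e_some g k h
    apply Sym2.map.injective (qv_inj g k hg.1 hk.1)
    rw [Sym2.map_map, Sym2.map_map]
    have e1 : (qv g k) ∘ (avm (canS g k)) = k.vmap := funext (qv_avm g k hk.1)
    have e2 : (qv g k) ∘ (Sum.inl : Y.V → EV (canS g k)) = g.vmap := rfl
    rw [e1, e2, ← g.comm, ← k.comm, hge]

noncomputable def qHom (hk : Function.Injective k.vmap) : (EG (canS g k)).Hom Z where
  vmap := qv g k
  emap := qe g k
  comm e := by
    rcases e with u | e
    · show Z.inc (g.emap u) = Sym2.map (qv g k) (Sym2.map Sum.inl (Y.inc u))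
      rw [Sym2.map_map, g.comm]
      rfl
    · show Z.inc (k.emap e.1) = Sym2.map (qv g k) (Sym2.map (avm (canS g k)) (A.inc e.1))
      rw [Sym2.map_map, k.comm]
      have e1 : (qv g k) ∘ (avm (canS g k)) = k.vmap := funext (qv_avm g k hk)
      rw [e1]

theorem qHom_b (hk : Function.Injective k.vmap) : (qHom g k hk).comp (bHom (canS g k)) = g :=
  hom_ext rfl rfl

theorem qHom_a (hk : k.Injective) (hgood : Good f y (canS g k)) :
    (qHom g k hk.1).comp (aHom (canS g k) hgood) = k :=
  hom_ext (funext (qv_avm g k hk.1)) (funext (qe_aem g k hk.2))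

end Glue

end MGShift

/-- **Existence of the Shift operation for uGraph.** For every condition `c` over `X`
and every injective homomorphism `y : X → Y` of finite undirected multigraphs, there is
a condition `c'` over `Y` such that for every multigraph `Z` and every injective
homomorphism `g : Y → Z`, `g ⊨ c'` iff `g ∘ y ⊨ c`. -/
theorem mg_shift_exists (X Y : MG) (c : MG.Cond X) (y : X.Hom Y) (hy : y.Injective) :
    ∃ c' : MG.Cond Y, ∀ (Z : MG) (g : Y.Hom Z), g.Injective →
      (MG.Sat c' g ↔ MG.Sat c (g.comp y)) := by
  revert Y
  induction c with
  | tru X =>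
    intro Y y hy
    exact ⟨.tru Y, fun Z g hg => by simp [MG.Sat]⟩
  | not c ih =>
    intro Y y hy
    obtain ⟨c', hc'⟩ := ih Y y hy
    refine ⟨.not c', fun Z g hg => ?_⟩
    show ¬ MG.Sat c' g ↔ ¬ MG.Sat c (g.comp y)
    exact not_congr (hc' Z g hg)
  | and c₁ c₂ ih₁ ih₂ =>
    intro Y y hy
    obtain ⟨c₁', hc₁⟩ := ih₁ Y y hy
    obtain ⟨c₂', hc₂⟩ := ih₂ Y y hy
    refine ⟨.and c₁' c₂', fun Z g hg => ?_⟩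
    show MG.Sat c₁' g ∧ MG.Sat c₂' g ↔ _ ∧ _
    exact and_congr (hc₁ Z g hg) (hc₂ Z g hg)
  | @ex X A f hf c ih =>
    intro Y y hy
    classical
    haveI : Finite Y.V := Y.finV
    haveI : Finite Y.E := Y.finE
    haveI : Finite A.V := A.finV
    haveI : Finite A.E := A.finE
    haveI := Fintype.ofFinite Y.V
    haveI := Fintype.ofFinite Y.E
    haveI := Fintype.ofFinite A.V
    haveI := Fintype.ofFinite A.E
    haveI : Finite (MGShift.SIdx A Y) := by unfold MGShift.SIdx; infer_instance
    haveI : Fintype {s : MGShift.SIdx A Y // MGShift.Good f y s} := Fintype.ofFinite _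
    choose cs hcs using fun s : {s : MGShift.SIdx A Y // MGShift.Good f y s} =>
      ih (MGShift.EG s.1) (MGShift.aHom s.1 s.2) (MGShift.aHom_inj s.1 s.2)
    refine ⟨MGShift.disj
      ((Finset.univ : Finset {s : MGShift.SIdx A Y // MGShift.Good f y s}).toList.map
        fun s => .ex (MGShift.bHom s.1) (MGShift.bHom_inj s.1) (cs s)), fun Z g hg => ?_⟩
    rw [MGShift.sat_disj]
    show _ ↔ ∃ k, k.Injective ∧ k.comp f = g.comp y ∧ MG.Sat c k
    simp only [List.mem_map, Finset.mem_toList, Finset.mem_univ, true_and]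
    constructor
    · rintro ⟨d, ⟨s, rfl⟩, hd⟩
      obtain ⟨q, hq, hqb, hqs⟩ := hd
      refine ⟨q.comp (MGShift.aHom s.1 s.2),
        MGShift.comp_inj hq (MGShift.aHom_inj s.1 s.2), ?_, ?_⟩
      · rw [MGShift.comp_assoc, MGShift.square s.1 s.2, ← MGShift.comp_assoc, hqb]
      · exact (hcs s Z q hq).mp hqs
    · rintro ⟨k, hk, hkf, hkc⟩
      have hgood : MGShift.Good f y (MGShift.canS g k) := MGShift.canS_good f y g k hg hk hkf
      refine ⟨_, ⟨⟨MGShift.canS g k, hgood⟩, rfl⟩,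
        MGShift.qHom g k hk.1,
        ⟨MGShift.qv_inj g k hg.1 hk.1, MGShift.qe_inj g k hg.2 hk.2⟩,
        MGShift.qHom_b g k hk.1, ?_⟩
      refine (hcs ⟨MGShift.canS g k, hgood⟩ Z (MGShift.qHom g k hk.1)
        ⟨MGShift.qv_inj g k hg.1 hk.1, MGShift.qe_inj g k hg.2 hk.2⟩).mpr ?_
      show MG.Sat c ((MGShift.qHom g k hk.1).comp (MGShift.aHom (MGShift.canS g k) hgood))
      rw [MGShift.qHom_a f y g k hk hgood]
      exact hkc
end

section
/- Let ν₊ ∈ ℝ and let ν₋, ε₊, ε₋ ∈ ℝ be strictly positive. Set α = ε₋ + ε₊ + 2ν₋, β = ε₋ + ε₊ + ν₋, κ = ε₋ + ν₋, λ = ε₋ + ε₊, ω = ε₋ + 2ν₋, and define f₁, f₂, f₃ : ℝ → ℝ by f₁(t) = (ν₊/ν₋)(1 − e^{−ν₋ t}), f₂(t) = (ν₊² e^{−α t} / (2 α β λ ν₋²)) · (α β ε₋ e^{λ t} + 2 ε₊ ν₋² − 2 α κ λ e^{β t} + β λ ω e^{α t}), and f₃(t) = (ε₊ ν₊² e^{−α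 t} / (2 α β λ ν₋²)) · (α β e^{λ t} − 2 α λ e^{β t} + β λ e^{α t} − 2 ν₋²). Then f₁(0) = f₂(0) = f₃(0) = 0, and for every t ∈ ℝ the functions are differentiable with f₁′(t) = ν₊ − ν₋ f₁(t), f₂′(t) = ν₊ f₁(t) − (2ν₋ + ε₊) f₂(t) + ε₋ f₃(t), and f₃′(t) = ε₊ f₂(t) − (2ν₋ + ε₋) f₃(t). -/
open Real

private lemma expD (a t : ℝ) :
    HasDerivAt (fun s : ℝ => Real.exp (a * s)) (a * Real.exp (a * t)) t := by
  simpa [mul_comm] using ((hasDerivAt_id t).const_mul a).exp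

set_option maxHeartbeats 1000000 in
/-- **Closed-form solution of the moment-evolution ODE system.** With strictly positive
rates `ν₋, ε₊, ε₋` (and `ν₊ ∈ ℝ`) and the abbreviations `α = ε₋ + ε₊ + 2ν₋`,
`β = ε₋ + ε₊ + ν₋`, `κ = ε₋ + ν₋`, `λ = ε₋ + ε₊`, `ω = ε₋ + 2ν₋`, the explicit
functions `f₁, f₂, f₃` vanish at `t = 0` and satisfy, for all `t`,
`f₁' = ν₊ − ν₋ f₁`, `f₂' = ν₊ f₁ − (2ν₋ + ε₊) f₂ + ε₋ f₃`, and
`f₃' = ε₊ f₂ − (2ν₋ + ε₋) f₃`. -/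
theorem moment_ode_closed_form_solution
    (νp νm εp εm : ℝ) (hνm : 0 < νm) (hεp : 0 < εp) (hεm : 0 < εm)
    (α β κ lam ω : ℝ)
    (hα : α = εm + εp + 2 * νm) (hβ : β = εm + εp + νm) (hκ : κ = εm + νm)
    (hlam : lam = εm + εp) (hω : ω = εm + 2 * νm)
    (f₁ f₂ f₃ : ℝ → ℝ)
    (hf₁ : ∀ t : ℝ, f₁ t = (νp / νm) * (1 - exp (-νm * t)))
    (hf₂ : ∀ t : ℝ, f₂ t =
      (νp ^ 2 * exp (-α * t) / (2 * α * β * lam * νm ^ 2)) *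
        (α * β * εm * exp (lam * t) + 2 * εp * νm ^ 2
          - 2 * α * κ * lam * exp (β * t) + β * lam * ω * exp (α * t)))
    (hf₃ : ∀ t : ℝ, f₃ t =
      (εp * νp ^ 2 * exp (-α * t) / (2 * α * β * lam * νm ^ 2)) *
        (α * β * exp (lam * t) - 2 * α * lam * exp (β * t)
          + β * lam * exp (α * t) - 2 * νm ^ 2)) :
    f₁ 0 = 0 ∧ f₂ 0 = 0 ∧ f₃ 0 = 0 ∧
    ∀ t : ℝ,
      HasDerivAt f₁ (νp - νm * f₁ t) t ∧
      HasDerivAt f₂ (νp * f₁ t - (2 * νm + εp) * f₂ t + εm * f₃ t) t ∧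
      HasDerivAt f₃ (εp * f₂ t - (2 * νm + εm) * f₃ t) t := by
  subst hα hβ hκ hlam hω
  have hνm' : νm ≠ 0 := ne_of_gt hνm
  have e1 : f₁ = fun t : ℝ => (νp / νm) * (1 - exp (-νm * t)) := funext hf₁
  have e2 : f₂ = fun t : ℝ =>
      (νp ^ 2 * exp (-(εm + εp + 2 * νm) * t) / (2 * (εm + εp + 2 * νm) * (εm + εp + νm) * (εm + εp) * νm ^ 2)) *
        ((εm + εp + 2 * νm) * (εm + εp + νm) * εm * exp ((εm + εp) * t) + 2 * εp * νm ^ 2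
          - 2 * (εm + εp + 2 * νm) * (εm + νm) * (εm + εp) * exp ((εm + εp + νm) * t)
          + (εm + εp + νm) * (εm + εp) * (εm + 2 * νm) * exp ((εm + εp + 2 * νm) * t)) := funext hf₂
  have e3 : f₃ = fun t : ℝ =>
      (εp * νp ^ 2 * exp (-(εm + εp + 2 * νm) * t) / (2 * (εm + εp + 2 * νm) * (εm + εp + νm) * (εm + εp) * νm ^ 2)) *
        ((εm + εp + 2 * νm) * (εm + εp + νm) * exp ((εm + εp) * t)
          - 2 * (εm + εp + 2 * νm) * (εm + εp) * exp ((εm + εp + νm) * t)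
          + (εm + εp + νm) * (εm + εp) * exp ((εm + εp + 2 * νm) * t) - 2 * νm ^ 2) := funext hf₃
  subst e1 e2 e3
  refine ⟨by simp, ?_, ?_, ?_⟩
  · simp only [mul_zero, Real.exp_zero, mul_one]; ring
  · simp only [mul_zero, Real.exp_zero, mul_one]; ring
  · intro t
    refine ⟨?_, ?_, ?_⟩
    · have h := ((hasDerivAt_const t (1:ℝ)).sub (expD (-νm) t)).const_mul (νp / νm)
      refine h.congr_deriv ?_
      field_simp
      ring
    · have h := ((expD (-(εm + εp + 2 * νm)) t).const_mul (νp ^ 2)).div_const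
        (2 * (εm + εp + 2 * νm) * (εm + εp + νm) * (εm + εp) * νm ^ 2) |>.mul
        ((((((expD (εm + εp) t).const_mul ((εm + εp + 2 * νm) * (εm + εp + νm) * εm)).add_const
          (2 * εp * νm ^ 2)).sub ((expD (εm + εp + νm) t).const_mul
            (2 * (εm + εp + 2 * νm) * (εm + νm) * (εm + εp)))).add
          ((expD (εm + εp + 2 * νm) t).const_mul ((εm + εp + νm) * (εm + εp) * (εm + 2 * νm)))))
      refine h.congr_deriv ?_
      simp only [Pi.add_apply, Pi.sub_apply]
      have k1 : exp ((εm + εp + νm) * t) = exp ((εm + εp) * t) * exp (νm * t) := by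
        rw [← Real.exp_add]; ring_nf
      have k2 : exp ((εm + εp + 2 * νm) * t) = exp ((εm + εp) * t) * exp (νm * t) * exp (νm * t) := by
        rw [← Real.exp_add, ← Real.exp_add]; ring_nf
      have k3 : exp (-(εm + εp + 2 * νm) * t) = (exp ((εm + εp) * t) * exp (νm * t) * exp (νm * t))⁻¹ := by
        rw [← k2, neg_mul, Real.exp_neg]
      have k4 : exp (-νm * t) = (exp (νm * t))⁻¹ := by rw [neg_mul, Real.exp_neg]
      simp only [k1, k2, k3, k4]
      have p1 : exp ((εm + εp) * t) ≠ 0 := Real.exp_ne_zero _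
      have p2 : exp (νm * t) ≠ 0 := Real.exp_ne_zero _
      field_simp
      ring
    · have h := ((expD (-(εm + εp + 2 * νm)) t).const_mul (εp * νp ^ 2)).div_const
        (2 * (εm + εp + 2 * νm) * (εm + εp + νm) * (εm + εp) * νm ^ 2) |>.mul
        (((((expD (εm + εp) t).const_mul ((εm + εp + 2 * νm) * (εm + εp + νm))).sub
          ((expD (εm + εp + νm) t).const_mul (2 * (εm + εp + 2 * νm) * (εm + εp)))).add
          ((expD (εm + εp + 2 * νm) t).const_mul ((εm + εp + νm) * (εm + εp)))).sub_const (2 * νm ^ 2))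
      refine h.congr_deriv ?_
      simp only [Pi.add_apply, Pi.sub_apply]
      have k1 : exp ((εm + εp + νm) * t) = exp ((εm + εp) * t) * exp (νm * t) := by
        rw [← Real.exp_add]; ring_nf
      have k2 : exp ((εm + εp + 2 * νm) * t) = exp ((εm + εp) * t) * exp (νm * t) * exp (νm * t) := by
        rw [← Real.exp_add, ← Real.exp_add]; ring_nf
      have k3 : exp (-(εm + εp + 2 * νm) * t) = (exp ((εm + εp) * t) * exp (νm * t) * exp (νm * t))⁻¹ := by
        rw [← k2, neg_mul, Real.exp_neg]
      simp only [k1, k2, k3]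
      have p1 : exp ((εm + εp) * t) ≠ 0 := Real.exp_ne_zero _
      have p2 : exp (νm * t) ≠ 0 := Real.exp_ne_zero _
      field_simp
      ring
end
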